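/- For n ≥ 6, in the spined cube SQ_n the induced subgraph on the set of vertices x_1⋯x_n with x_{n-1} = x_n = 0 is isomorphic to the (n-2)-dimensional hypercube Q_{n-2}. -/

import Mathlib

/-- The "difference vector" of the neighbor rules of the spined cube, `i` being the
0-based index of the flipped bit. -/
def sqDelta (n : ℕ) (x : Fin n → ZMod 2) (i : Fin n) : Fin n → ZMod 2 :=
  fun j =>
    (if j = i then 1 else 0) +
    (if i.val + 5 ≤ n then
      (if j.val = i.val + 1 then x ⟨n - 2, by have := i.isLt; omega⟩ else 0) +
      (if j.val = i.val + 2 then x ⟨n - 1, by have := i.isLt; omega⟩ else 0)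
    else if n ≤ i.val + 2 then 0
    else (if j.val = i.val + 1 then x ⟨n - 1, by have := i.isLt; omega⟩ else 0))

/-- The `n`-dimensional spined cube `SQ_n`. -/
def spinedCube (n : ℕ) : SimpleGraph (Fin n → ZMod 2) :=
  SimpleGraph.fromRel (fun x y => ∃ i : Fin n, y = x + sqDelta n x i)

/-- The `m`-dimensional hypercube. -/
def hypercube (m : ℕ) : SimpleGraph (Fin m → ZMod 2) :=
  SimpleGraph.fromRel (fun x y => (Finset.univ.filter (fun i => x i ≠ y i)).card = 1)

lemma sqDelta_eq (n : ℕ) (hn : 6 ≤ n) (x : Fin n → ZMod 2)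
    (h2 : x ⟨n - 2, Nat.sub_lt (by omega) (by decide)⟩ = 0) (h1 : x ⟨n - 1, Nat.sub_lt (by omega) (by decide)⟩ = 0) (i : Fin n) :
    sqDelta n x i = fun j => if j = i then 1 else 0 := by
  funext j
  unfold sqDelta
  have e2 : x ⟨n - 2, by have := i.isLt; omega⟩ = 0 := h2
  have e1 : x ⟨n - 1, by have := i.isLt; omega⟩ = 0 := h1
  split_ifs <;> simp [e1, e2]

lemma single_add_self (n : ℕ) (i : Fin n) :
    (fun j => if j = i then (1 : ZMod 2) else 0) + (fun j => if j = i then 1 else 0) = 0 := by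
  funext j
  show (if j = i then (1 : ZMod 2) else 0) + (if j = i then 1 else 0) = 0
  split <;> decide

lemma spinedCube_adj_iff (n : ℕ) (hn : 6 ≤ n) (x y : Fin n → ZMod 2)
    (hx2 : x ⟨n - 2, Nat.sub_lt (by omega) (by decide)⟩ = 0) (hx1 : x ⟨n - 1, Nat.sub_lt (by omega) (by decide)⟩ = 0)
    (hy2 : y ⟨n - 2, Nat.sub_lt (by omega) (by decide)⟩ = 0) (hy1 : y ⟨n - 1, Nat.sub_lt (by omega) (by decide)⟩ = 0) :
    (spinedCube n).Adj x y ↔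
      x ≠ y ∧ ∃ i : Fin n, i.val < n - 2 ∧ y = x + fun j => if j = i then 1 else 0 := by
  rw [spinedCube, SimpleGraph.fromRel_adj]
  constructor
  · rintro ⟨hne, h⟩
    refine ⟨hne, ?_⟩
    have key : ∃ i : Fin n, y = x + fun j => if j = i then 1 else 0 := by
      rcases h with ⟨i, h⟩ | ⟨i, h⟩
      · exact ⟨i, by rwa [sqDelta_eq n hn x hx2 hx1] at h⟩
      · rw [sqDelta_eq n hn y hy2 hy1] at h
        exact ⟨i, by rw [h, add_assoc, single_add_self, add_zero]⟩
    obtain ⟨i, h⟩ := key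
    refine ⟨i, ?_, h⟩
    by_contra hi
    have hcase : i.val = n - 2 ∨ i.val = n - 1 := by have := i.isLt; omega
    rcases hcase with hc | hc
    · have hie : (⟨n - 2, Nat.sub_lt (by omega) (by decide)⟩ : Fin n) = i := by
        apply Fin.ext; simp [hc]
      rw [h] at hy2
      simp only [Pi.add_apply, hx2, if_pos hie, zero_add] at hy2
      exact absurd hy2 (by decide)
    · have hie : (⟨n - 1, Nat.sub_lt (by omega) (by decide)⟩ : Fin n) = i := by
        apply Fin.ext; simp [hc]
      rw [h] at hy1
      simp only [Pi.add_apply, hx1, if_pos hie, zero_add] at hy1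
      exact absurd hy1 (by decide)
  · rintro ⟨hne, i, _, h⟩
    exact ⟨hne, Or.inl ⟨i, by rwa [sqDelta_eq n hn x hx2 hx1]⟩⟩

lemma hypercube_adj_iff (m : ℕ) (u v : Fin m → ZMod 2) :
    (hypercube m).Adj u v ↔
      u ≠ v ∧ (Finset.univ.filter (fun i => u i ≠ v i)).card = 1 := by
  rw [hypercube, SimpleGraph.fromRel_adj]
  have hsymm : (Finset.univ.filter (fun i => v i ≠ u i)) =
      (Finset.univ.filter (fun i => u i ≠ v i)) := by
    ext j; simp [ne_comm]
  rw [hsymm, or_self]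

lemma main_iff (n : ℕ) (hn : 6 ≤ n) (x y : Fin n → ZMod 2)
    (hx2 : x ⟨n - 2, Nat.sub_lt (by omega) (by decide)⟩ = 0) (hx1 : x ⟨n - 1, Nat.sub_lt (by omega) (by decide)⟩ = 0)
    (hy2 : y ⟨n - 2, Nat.sub_lt (by omega) (by decide)⟩ = 0) (hy1 : y ⟨n - 1, Nat.sub_lt (by omega) (by decide)⟩ = 0) :
    (x ≠ y ∧ ∃ i : Fin n, i.val < n - 2 ∧ y = x + fun j => if j = i then 1 else 0) ↔
      ((fun j : Fin (n - 2) => x ⟨j.1, by have := j.isLt; omega⟩) ≠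
          (fun j : Fin (n - 2) => y ⟨j.1, by have := j.isLt; omega⟩) ∧
        (Finset.univ.filter (fun j : Fin (n - 2) =>
          x ⟨j.1, by have := j.isLt; omega⟩ ≠ y ⟨j.1, by have := j.isLt; omega⟩)).card = 1) := by
  have hZ : ∀ a b : ZMod 2, a ≠ b ↔ b = a + 1 := by decide
  constructor
  · rintro ⟨hne, i, hi, h⟩
    have hfilter : (Finset.univ.filter (fun j : Fin (n - 2) =>
        x ⟨j.1, by have := j.isLt; omega⟩ ≠ y ⟨j.1, by have := j.isLt; omega⟩)) =
        {(⟨i.1, hi⟩ : Fin (n - 2))} := by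
      ext j
      simp only [Finset.mem_filter, Finset.mem_univ, true_and, Finset.mem_singleton]
      have hvj : y (⟨j.1, by have := j.isLt; omega⟩ : Fin n) =
          x ⟨j.1, by have := j.isLt; omega⟩ +
          if (⟨j.1, by have := j.isLt; omega⟩ : Fin n) = i then 1 else 0 := congrFun h _
      rw [hvj]
      by_cases hc : (⟨j.1, by have := j.isLt; omega⟩ : Fin n) = i
      · rw [if_pos hc]
        have hj : j = (⟨i.1, hi⟩ : Fin (n - 2)) := by
          apply Fin.ext; simpa [Fin.ext_iff] using hc
        simp [hj, hZ]
      · rw [if_neg hc, add_zero]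
        have hj : j ≠ (⟨i.1, hi⟩ : Fin (n - 2)) := by
          intro h'
          exact hc (Fin.ext (by simpa [Fin.ext_iff] using h'))
        simp [hj]
    refine ⟨?_, by rw [hfilter]; simp⟩
    intro huv
    have hmem := hfilter ▸ Finset.mem_singleton_self (⟨i.1, hi⟩ : Fin (n - 2))
    rw [Finset.mem_filter] at hmem
    exact hmem.2 (congrFun huv _)
  · rintro ⟨huv, hcard⟩
    obtain ⟨j, hj⟩ := Finset.card_eq_one.mp hcard
    have hne : x ≠ y := fun h => huv (by rw [h])
    refine ⟨hne, ⟨j.1, by have := j.isLt; omega⟩, by simp, ?_⟩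
    funext k
    show y k = x k + _
    beta_reduce
    by_cases hk : k.1 < n - 2
    · have hmem : (⟨k.1, hk⟩ : Fin (n - 2)) ∈ (Finset.univ.filter (fun j : Fin (n - 2) =>
          x ⟨j.1, by have := j.isLt; omega⟩ ≠ y ⟨j.1, by have := j.isLt; omega⟩)) ↔
          (⟨k.1, hk⟩ : Fin (n - 2)) = j := by rw [hj]; simp
      rw [Finset.mem_filter] at hmem
      have hxk : x (⟨k.1, by omega⟩ : Fin n) = x k := by congr 1
      have hyk : y (⟨k.1, by omega⟩ : Fin n) = y k := by congr 1
      by_cases hkj : (⟨k.1, hk⟩ : Fin (n - 2)) = j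
      · have hneq : x k ≠ y k := by
          have := (hmem.mpr hkj).2
          rwa [hxk, hyk] at this
        have hki : k = (⟨j.1, by have := j.isLt; omega⟩ : Fin n) := by
          apply Fin.ext; simpa [Fin.ext_iff] using hkj
        rw [if_pos hki]
        exact (hZ _ _).mp hneq
      · have heq : x k = y k := by
          by_contra hne'
          exact hkj (hmem.mp ⟨Finset.mem_univ _, by rwa [hxk, hyk]⟩)
        have hki : k ≠ (⟨j.1, by have := j.isLt; omega⟩ : Fin n) := by
          intro h'
          exact hkj (Fin.ext (by simpa [Fin.ext_iff] using h'))
        rw [if_neg hki, add_zero]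
        exact heq.symm
    · have hki : k ≠ (⟨j.1, by have := j.isLt; omega⟩ : Fin n) := by
        intro h'
        have := congrArg Fin.val h'
        simp at this
        have := j.isLt
        omega
      rw [if_neg hki, add_zero]
      have hcase : k.1 = n - 2 ∨ k.1 = n - 1 := by have := k.isLt; omega
      rcases hcase with hc | hc
      · have hk2 : k = (⟨n - 2, Nat.sub_lt (by omega) (by decide)⟩ : Fin n) := Fin.ext hc
        rw [hk2, hy2, hx2]
      · have hk1 : k = (⟨n - 1, Nat.sub_lt (by omega) (by decide)⟩ : Fin n) := Fin.ext hc
        rw [hk1, hy1, hx1]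

/-- For `n ≥ 6`, the subgraph of `SQ_n` induced on the vertices with
`x_{n-1} = x_n = 0` is isomorphic to the hypercube `Q_{n-2}`. -/
theorem spinedCube_induce_iso_hypercube (n : ℕ) (hn : 6 ≤ n) :
    Nonempty
      (((spinedCube n).induce
          {x : Fin n → ZMod 2 | x ⟨n - 2, by omega⟩ = 0 ∧ x ⟨n - 1, by omega⟩ = 0}) ≃g
        hypercube (n - 2)) := by
  refine ⟨⟨⟨fun x => fun j => x.1 ⟨j.1, by have := j.isLt; omega⟩,
    fun u => ⟨fun j => if h : j.1 < n - 2 then u ⟨j.1, h⟩ else 0, by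
      constructor <;>
        simp [show ¬(n - 2 < n - 2) from by omega, show ¬(n - 1 < n - 2) from by omega]⟩,
      ?_, ?_⟩, ?_⟩⟩
  · rintro ⟨x, hx2, hx1⟩
    apply Subtype.ext
    funext j
    dsimp only
    by_cases h : j.1 < n - 2
    · rw [dif_pos h]
    · rw [dif_neg h]
      have hcase : j.1 = n - 2 ∨ j.1 = n - 1 := by have := j.isLt; omega
      rcases hcase with hc | hc
      · have : j = (⟨n - 2, by omega⟩ : Fin n) := Fin.ext hc
        rw [this]; exact hx2.symm
      · have : j = (⟨n - 1, by omega⟩ : Fin n) := Fin.ext hc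
        rw [this]; exact hx1.symm
  · intro u
    funext j
    simp [j.isLt]
  · rintro ⟨x, hx2, hx1⟩ ⟨y, hy2, hy1⟩
    rw [SimpleGraph.comap_adj, Function.Embedding.coe_subtype, hypercube_adj_iff,
      spinedCube_adj_iff n hn x y hx2 hx1 hy2 hy1]
    exact (main_iff n hn x y hx2 hx1 hy2 hy1).symm
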